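/- For n i.i.d. bidders with density f on [0,b] and any nonnegative interim allocation q satisfying ∫_{[t,b]} q(s) f(s) ds ≤ (1 − F(t)ⁿ)/n for all t, and any weakly increasing, piecewise differentiable function φ : [0,b] → ℝ with φ(0) ≥ 0, one has ∫₀^b q(t) f(t) φ(t) dt ≤ ∫₀^b ((1 − F(t)ⁿ)/n) φ'(t) dt + φ(0)·(1 − F(0)ⁿ)/n. -/

import Mathlib

open Set MeasureTheory

/-- Integration by parts on the Border upper-tail bound: if the interim allocation `q`
satisfies `∫_{[t,b]} q f ≤ (1 − F(t)ⁿ)/n` for all `t` and `φ` is weakly increasing and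
differentiable with `φ(0) ≥ 0`, then
`∫₀^b q f φ ≤ ∫₀^b ((1 − Fⁿ)/n) φ' + φ(0)(1 − F(0)ⁿ)/n`. -/
theorem border_tail_integration_by_parts
    (n : ℕ) (hn : 1 ≤ n) (b : ℝ) (hb : 0 < b)
    (f F q φ φ' : ℝ → ℝ)
    (hf_nonneg : ∀ t ∈ Icc (0:ℝ) b, 0 ≤ f t)
    (hf_int : IntegrableOn f (Icc 0 b))
    (hF : ∀ t ∈ Icc (0:ℝ) b, F t = ∫ s in Icc (0:ℝ) t, f s)
    (hFb : F b = 1)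
    (hq_nonneg : ∀ t ∈ Icc (0:ℝ) b, 0 ≤ q t)
    (hqf_int : IntegrableOn (fun t => q t * f t) (Icc 0 b))
    (htail : ∀ t ∈ Icc (0:ℝ) b, (∫ s in Icc t b, q s * f s) ≤ (1 - F t ^ n) / n)
    (hφ_mono : MonotoneOn φ (Icc 0 b))
    (hφ_deriv : ∀ t ∈ Icc (0:ℝ) b, HasDerivWithinAt φ (φ' t) (Icc 0 b) t)
    (hφ'_nonneg : ∀ t ∈ Icc (0:ℝ) b, 0 ≤ φ' t)
    (hφ0 : 0 ≤ φ 0) :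
    (∫ t in Icc (0:ℝ) b, q t * f t * φ t) ≤
      (∫ t in Icc (0:ℝ) b, (1 - F t ^ n) / n * φ' t) + φ 0 * (1 - F 0 ^ n) / n := by
  have hb' : (0:ℝ) ≤ b := hb.le
  have h0mem : (0:ℝ) ∈ Icc (0:ℝ) b := ⟨le_rfl, hb'⟩
  -- continuity of φ
  have hcont : ContinuousOn φ (Icc 0 b) := fun t ht => (hφ_deriv t ht).continuousWithinAt
  -- derivative at interior points
  have hderivAt : ∀ x ∈ Ioo (0:ℝ) b, HasDerivAt φ (φ' x) x := by
    intro x hx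
    exact (hφ_deriv x (Ioo_subset_Icc_self hx)).hasDerivAt (Icc_mem_nhds hx.1 hx.2)
  -- φ' is integrable
  have hφ'_int : IntegrableOn φ' (Icc 0 b) := by
    have h1 : IntegrableOn φ' (Ioc 0 b) :=
      intervalIntegral.integrableOn_deriv_of_nonneg hcont hderivAt
        (fun x hx => hφ'_nonneg x (Ioo_subset_Icc_self hx))
    rwa [integrableOn_Icc_iff_integrableOn_Ioc]
  -- FTC
  have hFTC : ∀ t ∈ Icc (0:ℝ) b, φ t = φ 0 + ∫ s in Icc (0:ℝ) t, φ' s := by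
    intro t ht
    have hint : IntervalIntegrable φ' volume 0 t := by
      rw [intervalIntegrable_iff_integrableOn_Icc_of_le ht.1]
      exact hφ'_int.mono_set (Icc_subset_Icc le_rfl ht.2)
    have := intervalIntegral.integral_eq_sub_of_hasDeriv_right_of_le ht.1
      (hcont.mono (Icc_subset_Icc le_rfl ht.2))
      (fun x hx => (hderivAt x ⟨hx.1, hx.2.trans_le ht.2⟩).hasDerivWithinAt) hint
    rw [intervalIntegral.integral_of_le ht.1] at this
    rw [integral_Icc_eq_integral_Ioc, this]; ring
  -- the product kernel
  set G : ℝ × ℝ → ℝ :=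
    {p : ℝ × ℝ | p.2 ≤ p.1}.indicator (fun p => q p.1 * f p.1 * φ' p.2) with hG
  set μ := volume.restrict (Icc (0:ℝ) b) with hμ
  have hSmeas : MeasurableSet {p : ℝ × ℝ | p.2 ≤ p.1} :=
    measurableSet_le measurable_snd measurable_fst
  have hG_aesm : AEStronglyMeasurable G (μ.prod μ) := by
    refine AEStronglyMeasurable.indicator ?_ hSmeas
    exact (hqf_int.aestronglyMeasurable.comp_fst.mul hφ'_int.aestronglyMeasurable.comp_snd)
  have hG_int : Integrable G (μ.prod μ) := by
    refine Integrable.mono' ((hqf_int.abs).mul_prod (hφ'_int.abs)) hG_aesm ?_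
    refine Filter.Eventually.of_forall (fun p => ?_)
    rw [hG]
    by_cases hp : p ∈ {p : ℝ × ℝ | p.2 ≤ p.1}
    · rw [indicator_of_mem hp]
      simp [abs_mul, mul_assoc, le_refl]
    · rw [indicator_of_notMem hp]
      simp only [norm_zero]
      positivity
  -- inner integral in s
  have hinner_s : ∀ t ∈ Icc (0:ℝ) b,
      (∫ s in Icc (0:ℝ) b, G (t, s)) = q t * f t * ∫ s in Icc (0:ℝ) t, φ' s := by
    intro t ht
    have : ∀ s : ℝ, G (t, s) = (Iic t).indicator (fun s => q t * f t * φ' s) s := by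
      intro s
      by_cases hs : s ≤ t
      · rw [hG, indicator_of_mem (show ((t,s) : ℝ × ℝ) ∈ {p : ℝ × ℝ | p.2 ≤ p.1} from hs),
          indicator_of_mem (mem_Iic.2 hs)]
      · rw [hG, indicator_of_notMem (show ((t,s) : ℝ × ℝ) ∉ {p : ℝ × ℝ | p.2 ≤ p.1} from hs),
          indicator_of_notMem (by simpa using hs)]
    simp_rw [this]
    rw [setIntegral_indicator measurableSet_Iic]
    have : Icc (0:ℝ) b ∩ Iic t = Icc 0 t := by
      ext x; simp only [mem_inter_iff, mem_Icc, mem_Iic]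
      constructor
      · rintro ⟨⟨h1, _⟩, h3⟩; exact ⟨h1, h3⟩
      · rintro ⟨h1, h2⟩; exact ⟨⟨h1, h2.trans ht.2⟩, h2⟩
    rw [this, integral_const_mul]
  -- inner integral in t
  have hinner_t : ∀ s ∈ Icc (0:ℝ) b,
      (∫ t in Icc (0:ℝ) b, G (t, s)) = φ' s * ∫ t in Icc s b, q t * f t := by
    intro s hs
    have : ∀ t : ℝ, G (t, s) = (Ici s).indicator (fun t => φ' s * (q t * f t)) t := by
      intro t
      by_cases hts : s ≤ t
      · rw [hG, indicator_of_mem (show ((t,s) : ℝ × ℝ) ∈ {p : ℝ × ℝ | p.2 ≤ p.1} from hts),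
          indicator_of_mem (mem_Ici.2 hts)]; ring
      · rw [hG, indicator_of_notMem (show ((t,s) : ℝ × ℝ) ∉ {p : ℝ × ℝ | p.2 ≤ p.1} from hts),
          indicator_of_notMem (by simpa using hts)]
    simp_rw [this]
    rw [setIntegral_indicator measurableSet_Ici]
    have : Icc (0:ℝ) b ∩ Ici s = Icc s b := by
      ext x; simp only [mem_inter_iff, mem_Icc, mem_Ici]
      constructor
      · rintro ⟨⟨_, h2⟩, h3⟩; exact ⟨h3, h2⟩
      · rintro ⟨h1, h2⟩; exact ⟨⟨hs.1.trans h1, h2⟩, h1⟩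
    rw [this, integral_const_mul]
  -- Fubini
  have hswap : (∫ t in Icc (0:ℝ) b, ∫ s in Icc (0:ℝ) b, G (t, s))
      = ∫ s in Icc (0:ℝ) b, ∫ t in Icc (0:ℝ) b, G (t, s) := by
    exact integral_integral_swap hG_int
  -- F is continuous
  have hF_cont : ContinuousOn F (Icc 0 b) := by
    have := intervalIntegral.continuousOn_primitive_Icc (μ := volume) (a := (0:ℝ)) (b := b) hf_int
    exact ContinuousOn.congr this hF
  -- RHS integrand integrable
  have hRHS_int : IntegrableOn (fun s => (1 - F s ^ n) / n * φ' s) (Icc 0 b) := by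
    refine IntegrableOn.continuousOn_mul ?_ hφ'_int isCompact_Icc
    exact ((continuousOn_const.sub (hF_cont.pow n)).div_const _)
  -- qfφ integrable
  have hqfφ_int : IntegrableOn (fun t => q t * f t * φ t) (Icc 0 b) :=
    hqf_int.mul_continuousOn hcont isCompact_Icc
  -- main decomposition
  have hdecomp : (∫ t in Icc (0:ℝ) b, q t * f t * φ t)
      = φ 0 * (∫ t in Icc (0:ℝ) b, q t * f t)
        + ∫ t in Icc (0:ℝ) b, ∫ s in Icc (0:ℝ) b, G (t, s) := by
    have h2 : IntegrableOn (fun t => q t * f t * φ 0) (Icc 0 b) := hqf_int.mul_const _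
    have h3 : IntegrableOn (fun t => ∫ s in Icc (0:ℝ) b, G (t, s)) (Icc 0 b) := by
      refine IntegrableOn.congr_fun (f := fun t => q t * f t * φ t - q t * f t * φ 0)
        (hqfφ_int.sub h2) (fun t ht => ?_) measurableSet_Icc
      rw [hinner_s t ht]
      simp only
      rw [hFTC t ht]; ring
    have h1 : (∫ t in Icc (0:ℝ) b, q t * f t * φ t)
        = ∫ t in Icc (0:ℝ) b, (q t * f t * φ 0 + ∫ s in Icc (0:ℝ) b, G (t, s)) := by
      refine setIntegral_congr_fun measurableSet_Icc (fun t ht => ?_)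
      rw [hinner_s t ht, hFTC t ht]; ring
    rw [h1, integral_add h2 h3, ← integral_const_mul]
    congr 1
    refine setIntegral_congr_fun measurableSet_Icc (fun t ht => ?_)
    ring
  rw [hdecomp, hswap]
  have step1 : (∫ s in Icc (0:ℝ) b, ∫ t in Icc (0:ℝ) b, G (t, s))
      ≤ ∫ s in Icc (0:ℝ) b, (1 - F s ^ n) / n * φ' s := by
    refine integral_mono_of_nonneg ?_ hRHS_int ?_
    · refine (ae_restrict_iff' measurableSet_Icc).2 (Filter.Eventually.of_forall (fun s hs => ?_))
      dsimp only [Pi.zero_apply]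
      rw [hinner_t s hs]
      have htail_nonneg : 0 ≤ ∫ t in Icc s b, q t * f t :=
        setIntegral_nonneg measurableSet_Icc
          (fun t ht => mul_nonneg (hq_nonneg t ⟨hs.1.trans ht.1, ht.2⟩)
            (hf_nonneg t ⟨hs.1.trans ht.1, ht.2⟩))
      exact mul_nonneg (hφ'_nonneg s hs) htail_nonneg
    · refine (ae_restrict_iff' measurableSet_Icc).2 (Filter.Eventually.of_forall (fun s hs => ?_))
      dsimp only
      rw [hinner_t s hs, mul_comm ((1 - F s ^ n) / (n:ℝ))]
      exact mul_le_mul_of_nonneg_left (htail s hs) (hφ'_nonneg s hs)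
  have step2 : φ 0 * (∫ t in Icc (0:ℝ) b, q t * f t) ≤ φ 0 * (1 - F 0 ^ n) / n := by
    rw [mul_div_assoc]
    exact mul_le_mul_of_nonneg_left (htail 0 h0mem) hφ0
  linarith
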